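/- Let f : {0,1} → ℝ be a nonzero nonnegative function on the one-dimensional Hamming cube. Then D²(f) = 4 · K²(f) · φ(Ent(f²)/K²(f)), where D²(f) = E_x Σ_{y∼x} (f(x) − f(y))², K²(f) = (1/4) · E_x Σ_{y∼x} (f(x) + f(y))², and φ : [0, 2 log 2] → [0,1] is the inverse of ψ. -/

import Mathlib

/-- Expectation of `g` over the uniform measure on the Hamming cube `{0,1}^n`. -/
noncomputable def cubeE (n : ℕ) (g : (Fin n → Bool) → ℝ) : ℝ :=
  (∑ x : Fin n → Bool, g x) / 2 ^ n

/-- `E_x ∑_{y ∼ x} (f x - f y)^2` on the Hamming cube `{0,1}^n`. -/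
noncomputable def cubeD2 (n : ℕ) (f : (Fin n → Bool) → ℝ) : ℝ :=
  cubeE n (fun x => ∑ i : Fin n, (f x - f (Function.update x i (!x i))) ^ 2)

/-- `Ent(f²) = E[f² log f²] - E[f²] log E[f²]` (note `Real.log 0 = 0`). -/
noncomputable def cubeEnt (n : ℕ) (f : (Fin n → Bool) → ℝ) : ℝ :=
  cubeE n (fun x => f x ^ 2 * Real.log (f x ^ 2)) -
    cubeE n (fun x => f x ^ 2) * Real.log (cubeE n (fun x => f x ^ 2))

/-- `K²(f) = (1/4)·E_x ∑_{y∼x} (f x + f y)²` on the Hamming cube `{0,1}^n`. -/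
noncomputable def cubeK2 (n : ℕ) (f : (Fin n → Bool) → ℝ) : ℝ :=
  (1 / 4) * cubeE n (fun x => ∑ i : Fin n, (f x + f (Function.update x i (!x i))) ^ 2)

/-- `ψ(t) = (1/2)(1−√t)² log((1−√t)²) + (1/2)(1+√t)² log((1+√t)²) − (1+t) log(1+t)`
(note `Real.log 0 = 0`). -/
noncomputable def psi (t : ℝ) : ℝ :=
  (1 / 2) * (1 - Real.sqrt t) ^ 2 * Real.log ((1 - Real.sqrt t) ^ 2) +
    (1 / 2) * (1 + Real.sqrt t) ^ 2 * Real.log ((1 + Real.sqrt t) ^ 2) -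
    (1 + t) * Real.log (1 + t)

/-- The key identity: `Ent(f²) = K²(f)·ψ(D²(f)/(4K²(f)))` written out for the
two values `a ≥ b ≥ 0` of `f` on `{0,1}`. -/
lemma cube_key (a b : ℝ) (hb : 0 ≤ b) (hba : b ≤ a) (hs : 0 < a + b) :
    (a^2*Real.log (a^2) + b^2*Real.log (b^2))/2 - ((a^2+b^2)/2)*Real.log ((a^2+b^2)/2)
      = ((a+b)^2/4) * psi ((a-b)^2/(a+b)^2) := by
  have ha : 0 < a := by linarith
  have hsne : (a+b) ≠ 0 := hs.ne'
  unfold psi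
  have hsq : Real.sqrt ((a-b)^2/(a+b)^2) = (a-b)/(a+b) := by
    rw [← div_pow, Real.sqrt_sq (div_nonneg (by linarith) hs.le)]
  rw [hsq]
  have h1 : 1 - (a-b)/(a+b) = 2*b/(a+b) := by field_simp; ring
  have h2 : 1 + (a-b)/(a+b) = 2*a/(a+b) := by field_simp; ring
  rw [h1, h2]
  have e1 : (2*b/(a+b))^2 = (4/(a+b)^2)*b^2 := by field_simp; ring
  have e2 : (2*a/(a+b))^2 = (4/(a+b)^2)*a^2 := by field_simp; ring
  have e3 : 1 + (a-b)^2/(a+b)^2 = (4/(a+b)^2)*((a^2+b^2)/2) := by field_simp; ring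
  rw [e1, e2, e3]
  set c := 4/(a+b)^2 with hc
  have hcpos : 0 < c := by rw [hc]; positivity
  have hcs : c * (a+b)^2 = 4 := by rw [hc]; field_simp
  have hA : Real.log (c*a^2) = Real.log c + Real.log (a^2) :=
    Real.log_mul hcpos.ne' (pow_ne_zero 2 ha.ne')
  have hM : Real.log (c*((a^2+b^2)/2)) = Real.log c + Real.log ((a^2+b^2)/2) :=
    Real.log_mul hcpos.ne' (by positivity)
  have hB : b^2 * Real.log (c*b^2) = b^2*(Real.log c + Real.log (b^2)) := by
    rcases eq_or_ne b 0 with h|h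
    · simp [h]
    · rw [Real.log_mul hcpos.ne' (pow_ne_zero 2 h)]
  rw [hA, hM]
  linear_combination (-(a+b)^2*c/8) * hB +
    (-(b^2*Real.log (b^2) + a^2*Real.log (a^2) - (a^2+b^2)*Real.log ((a^2+b^2)/2))/8) * hcs

/-- For a nonzero nonnegative `f` on the one-dimensional Hamming cube `{0,1}`,
`D²(f) = 4·K²(f)·φ(Ent(f²)/K²(f))`, where `φ : [0, 2 log 2] → [0,1]` is the
inverse of `ψ`. -/
theorem D2_eq_of_phi_dim_one
    (f : (Fin 1 → Bool) → ℝ) (hf : f ≠ 0) (hfpos : ∀ x, 0 ≤ f x)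
    (φ : ℝ → ℝ)
    (hφmem : ∀ y ∈ Set.Icc (0 : ℝ) (2 * Real.log 2), φ y ∈ Set.Icc (0 : ℝ) 1)
    (hφright : ∀ y ∈ Set.Icc (0 : ℝ) (2 * Real.log 2), psi (φ y) = y)
    (hφleft : ∀ t ∈ Set.Icc (0 : ℝ) 1, φ (psi t) = t) :
    cubeD2 1 f = 4 * cubeK2 1 f * φ (cubeEnt 1 f / cubeK2 1 f) := by
  set a := f (fun _ => false) with hadef
  set b := f (fun _ => true) with hbdef
  have sum_eq : ∀ g : (Fin 1 → Bool) → ℝ,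
      (∑ x : Fin 1 → Bool, g x) = g (fun _ => false) + g (fun _ => true) := by
    intro g
    rw [← (Equiv.funUnique (Fin 1) Bool).symm.sum_comp g]
    have h1 : ∀ c : Bool, (Equiv.funUnique (Fin 1) Bool).symm c = fun _ => c := by
      intro c; funext j; rfl
    simp [h1, add_comm]
  have hupd : ∀ (x : Fin 1 → Bool) (i : Fin 1),
      f (Function.update x i (!x i)) = f (fun _ => !x 0) := by
    intro x i
    congr 1
    funext j
    have hj : j = i := Subsingleton.elim _ _
    have hi : i = 0 := Subsingleton.elim _ _
    subst hj; subst hi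
    simp
  have ha0 : 0 ≤ a := hfpos _
  have hb0 : 0 ≤ b := hfpos _
  have hs : 0 < a + b := by
    rcases lt_or_eq_of_le (by linarith : (0:ℝ) ≤ a + b) with h | h
    · exact h
    · exfalso
      apply hf
      have ha' : a = 0 := by linarith
      have hb' : b = 0 := by linarith
      funext x
      have hx : x = fun _ => x 0 := funext fun j => by rw [Subsingleton.elim j 0]
      rw [hx]
      cases h0 : x 0
      · simpa using ha'
      · simpa using hb'
  have hsne : (a + b) ≠ 0 := hs.ne'
  have hD : cubeD2 1 f = (a - b)^2 := by
    unfold cubeD2 cubeE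
    rw [sum_eq]
    simp only [Fin.sum_univ_one, hupd]
    norm_num
    ring
  have hK : cubeK2 1 f = (a + b)^2 / 4 := by
    unfold cubeK2 cubeE
    rw [sum_eq]
    simp only [Fin.sum_univ_one, hupd]
    norm_num
    ring
  have hE : cubeEnt 1 f =
      (a^2*Real.log (a^2) + b^2*Real.log (b^2))/2
        - ((a^2+b^2)/2)*Real.log ((a^2+b^2)/2) := by
    unfold cubeEnt cubeE
    rw [sum_eq, sum_eq]
    norm_num
    rfl
  have hEnt : cubeEnt 1 f = ((a+b)^2/4) * psi ((a-b)^2/(a+b)^2) := by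
    rw [hE]
    rcases le_total b a with h | h
    · exact cube_key a b hb0 h hs
    · have := cube_key b a ha0 h (by linarith)
      have h1 : b^2 + a^2 = a^2 + b^2 := by ring
      have h2 : (b - a)^2 = (a - b)^2 := by ring
      have h3 : (b + a) = (a + b) := by ring
      rw [h1, h2, h3] at this
      linarith
  have ht : (a-b)^2/(a+b)^2 ∈ Set.Icc (0:ℝ) 1 := by
    constructor
    · positivity
    · rw [div_le_one (by positivity)]
      nlinarith [mul_nonneg ha0 hb0]
  have hKne : (a+b)^2/4 ≠ 0 := by positivity
  have hdiv : cubeEnt 1 f / cubeK2 1 f = psi ((a-b)^2/(a+b)^2) := by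
    rw [hEnt, hK, mul_comm, mul_div_assoc, div_self hKne, mul_one]
  rw [hD, hdiv, hφleft _ ht, hK]
  field_simp
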